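/- arXiv:1902.06249 — 7 statements merged into one kernel-verified Lean document; each statement's English description precedes it below -/
import Mathlib

section
/- Let m be a Borel measure on ℝ that is finite on compact sets, and let q be the associated function. Then for all real numbers y < z and all x ∈ ℝ, one has q(z,x) = q(y,x) − q(y,z) − D·(x − z), where D = m((y,z)) + (1/2) m({y}) + (1/2) m({z}). -/
open MeasureTheory

/-- Signed measure of the open interval between `y` and `u`:
`m((y,u))` for `u ≥ y` and `-m((u,y))` for `u < y`. -/
noncomputable def signedIoo (m : Measure ℝ) (y u : ℝ) : ℝ :=
  if y ≤ u then (m (Set.Ioo y u)).toReal else -(m (Set.Ioo u y)).toReal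

lemma Ioo_ne_top (m : Measure ℝ) [IsFiniteMeasureOnCompacts m] (a b : ℝ) :
    m (Set.Ioo a b) ≠ ⊤ :=
  ((measure_mono Set.Ioo_subset_Icc_self).trans_lt measure_Icc_lt_top).ne

lemma sing_ne_top (m : Measure ℝ) [IsFiniteMeasureOnCompacts m] (a : ℝ) :
    m {a} ≠ ⊤ := by
  have h : ({a} : Set ℝ) ⊆ Set.Icc a a := by simp
  exact ((measure_mono h).trans_lt measure_Icc_lt_top).ne

lemma tri (m : Measure ℝ) [IsFiniteMeasureOnCompacts m] {a b c : ℝ} (hab : a < b) (hbc : b < c) :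
    (m (Set.Ioo a c)).toReal
      = (m (Set.Ioo a b)).toReal + (m {b}).toReal + (m (Set.Ioo b c)).toReal := by
  have h1 : Set.Ioo a c = Set.Ioo a b ∪ Set.Ico b c :=
    (Set.Ioo_union_Ico_eq_Ioo hab hbc.le).symm
  have h2 : Set.Ico b c = {b} ∪ Set.Ioo b c := by
    rw [← Set.insert_eq, Set.Ioo_insert_left hbc]
  have hdisj : Disjoint (Set.Ioo a b) (Set.Ico b c) :=
    Set.disjoint_left.2 fun u hu hu' => (hu.2.not_ge hu'.1)
  have hdisj2 : Disjoint ({b} : Set ℝ) (Set.Ioo b c) :=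
    Set.disjoint_left.2 fun u hu hu' => absurd hu' (by rw [Set.mem_singleton_iff] at hu; rw [hu]; exact fun h => lt_irrefl b h.1)
  rw [h1, measure_union hdisj measurableSet_Ico, h2, measure_union hdisj2 measurableSet_Ioo]
  rw [ENNReal.toReal_add (Ioo_ne_top m a b)
      (ENNReal.add_ne_top.2 ⟨sing_ne_top m b, Ioo_ne_top m b c⟩),
    ENNReal.toReal_add (sing_ne_top m b) (Ioo_ne_top m b c)]
  ring

lemma signedIoo_mono (m : Measure ℝ) [IsFiniteMeasureOnCompacts m] (y : ℝ) :
    Monotone (signedIoo m y) := by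
  intro u v huv
  unfold signedIoo
  rcases le_or_gt y u with hu | hu
  · rw [if_pos hu, if_pos (hu.trans huv)]
    exact ENNReal.toReal_mono (Ioo_ne_top m y v) (measure_mono (Set.Ioo_subset_Ioo_right huv))
  · rw [if_neg hu.not_ge]
    rcases le_or_gt y v with hv | hv
    · rw [if_pos hv]
      exact le_trans (neg_nonpos.2 ENNReal.toReal_nonneg) ENNReal.toReal_nonneg
    · rw [if_neg hv.not_ge]
      exact neg_le_neg
        (ENNReal.toReal_mono (Ioo_ne_top m u y) (measure_mono (Set.Ioo_subset_Ioo_left huv)))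

lemma signedIoo_integrable (m : Measure ℝ) [IsFiniteMeasureOnCompacts m] (y a b : ℝ) :
    IntervalIntegrable (signedIoo m y) volume a b :=
  ((signedIoo_mono m y).monotoneOn _).intervalIntegrable

lemma key_ae (m : Measure ℝ) [IsFiniteMeasureOnCompacts m] {y z : ℝ} (hyz : y < z) :
    ∀ᵐ u ∂(volume : Measure ℝ),
      signedIoo m y u = signedIoo m z u + (m (Set.Ioo y z)).toReal
        + (m {z}).toReal * (Set.Ioi z).indicator 1 u
        + (m {y}).toReal * (Set.Iio y).indicator 1 u := by
  have hcount : Set.Countable ({y, z} ∪ {u : ℝ | 0 < m {u}}) := by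
    refine (Set.countable_insert.2 (Set.countable_singleton z)).union ?_
    exact MeasureTheory.Measure.countable_meas_pos_of_disjoint_iUnion
      (fun u => measurableSet_singleton u) (fun a b hab => by simpa [Function.onFun] using hab)
  have hnull : (volume : Measure ℝ) ({y, z} ∪ {u : ℝ | 0 < m {u}}) = 0 :=
    hcount.measure_zero _
  have hae : ∀ᵐ u ∂(volume : Measure ℝ), u ∉ ({y, z} ∪ {u : ℝ | 0 < m {u}}) :=
    measure_eq_zero_iff_ae_notMem.1 hnull
  filter_upwards [hae] with u hu
  simp only [Set.mem_union, Set.mem_insert_iff, Set.mem_singleton_iff, Set.mem_setOf_eq,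
    not_or, not_lt] at hu
  obtain ⟨⟨huy, huz⟩, hatom⟩ := hu
  have hmu : (m {u}).toReal = 0 := by
    rw [le_antisymm hatom zero_le]; rfl
  unfold signedIoo
  rcases lt_trichotomy u y with h1 | h1 | h1
  · have h2 : u < z := h1.trans hyz
    rw [if_neg (not_le.2 h1), if_neg (not_le.2 h2)]
    rw [Set.indicator_of_notMem (by simpa using h2.le), Set.indicator_of_mem (Set.mem_Iio.2 h1)]
    have := tri m h1 hyz
    simp only [Pi.one_apply]
    linarith
  · exact absurd h1 huy
  · rcases lt_trichotomy u z with h2 | h2 | h2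
    · rw [if_pos h1.le, if_neg (not_le.2 h2)]
      rw [Set.indicator_of_notMem (by simpa using h2.le),
        Set.indicator_of_notMem (by simpa using h1.le)]
      have := tri m h1 h2
      linarith
    · exact absurd h2 huz
    · rw [if_pos h1.le, if_pos h2.le]
      rw [Set.indicator_of_mem (Set.mem_Ioi.2 h2), Set.indicator_of_notMem (by simpa using (hyz.trans h2).le)]
      have := tri m hyz h2
      simp only [Pi.one_apply]
      linarith

lemma ind_Ioi_mono (z : ℝ) : Monotone ((Set.Ioi z).indicator (1 : ℝ → ℝ)) := by
  intro u v huv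
  by_cases hu : u ∈ Set.Ioi z
  · rw [Set.indicator_of_mem hu, Set.indicator_of_mem (Set.mem_Ioi.2 (lt_of_lt_of_le hu huv))]
    simp
  · rw [Set.indicator_of_notMem hu]
    exact Set.indicator_nonneg (fun _ _ => zero_le_one) v

lemma ind_Iio_anti (y : ℝ) : Antitone ((Set.Iio y).indicator (1 : ℝ → ℝ)) := by
  intro u v huv
  by_cases hv : v ∈ Set.Iio y
  · rw [Set.indicator_of_mem hv, Set.indicator_of_mem (Set.mem_Iio.2 (lt_of_le_of_lt huv hv))]
    simp
  · rw [Set.indicator_of_notMem hv]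
    exact Set.indicator_nonneg (fun _ _ => zero_le_one) u

lemma int_ind_Ioi (z x : ℝ) :
    (∫ u in z..x, (Set.Ioi z).indicator (1 : ℝ → ℝ) u) = max (x - z) 0 := by
  rcases le_total z x with h | h
  · rw [intervalIntegral.integral_congr_ae (g := fun _ => (1 : ℝ))
      (Filter.Eventually.of_forall fun u hu => by
        rw [Set.uIoc_of_le h] at hu
        exact Set.indicator_of_mem (Set.mem_Ioi.2 hu.1) _),
      intervalIntegral.integral_const, smul_eq_mul, mul_one]
    exact (max_eq_left (by linarith)).symm
  · rw [intervalIntegral.integral_congr_ae (g := fun _ => (0 : ℝ))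
      (Filter.Eventually.of_forall fun u hu => by
        rw [Set.uIoc_comm, Set.uIoc_of_le h] at hu
        exact Set.indicator_of_notMem (by simpa using hu.2) _),
      intervalIntegral.integral_const, smul_zero]
    exact (max_eq_right (by linarith)).symm

lemma int_ind_Iio (y z x : ℝ) (hyz : y < z) :
    (∫ u in z..x, (Set.Iio y).indicator (1 : ℝ → ℝ) u) = -(max (y - x) 0) := by
  rcases le_total z x with h | h
  · rw [intervalIntegral.integral_congr_ae (g := fun _ => (0 : ℝ))
      (Filter.Eventually.of_forall fun u hu => by
        rw [Set.uIoc_of_le h] at hu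
        exact Set.indicator_of_notMem (by simp only [Set.mem_Iio, not_lt]; exact (hyz.trans hu.1).le) _),
      intervalIntegral.integral_const, smul_zero]
    rw [max_eq_right (by linarith), neg_zero]
  · rw [intervalIntegral.integral_symm]
    rcases le_total y x with h2 | h2
    · rw [intervalIntegral.integral_congr_ae (g := fun _ => (0 : ℝ))
        (Filter.Eventually.of_forall fun u hu => by
          rw [Set.uIoc_of_le h] at hu
          exact Set.indicator_of_notMem (by simp only [Set.mem_Iio, not_lt]; exact h2.trans hu.1.le) _),
        intervalIntegral.integral_const, smul_zero]
      simp [max_eq_right (show y - x ≤ 0 by linarith)]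
    · have hyzle : y ≤ z := hyz.le
      have i1 : IntervalIntegrable ((Set.Iio y).indicator (1 : ℝ → ℝ)) volume x y :=
        ((ind_Iio_anti y).antitoneOn _).intervalIntegrable
      have i2 : IntervalIntegrable ((Set.Iio y).indicator (1 : ℝ → ℝ)) volume y z :=
        ((ind_Iio_anti y).antitoneOn _).intervalIntegrable
      have hsplit := intervalIntegral.integral_add_adjacent_intervals i1 i2
      have hy : ∀ᵐ u : ℝ, u ∉ ({y} : Set ℝ) :=
        measure_eq_zero_iff_ae_notMem.1 Real.volume_singleton
      have e1 : (∫ u in x..y, (Set.Iio y).indicator (1 : ℝ → ℝ) u) = y - x := by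
        rw [intervalIntegral.integral_congr_ae (g := fun _ => (1 : ℝ))
          (hy.mono fun u hu hmem => by
            rw [Set.uIoc_of_le h2] at hmem
            exact Set.indicator_of_mem
              (Set.mem_Iio.2 (lt_of_le_of_ne hmem.2 (by simpa using hu))) _),
          intervalIntegral.integral_const, smul_eq_mul, mul_one]
      have e2 : (∫ u in y..z, (Set.Iio y).indicator (1 : ℝ → ℝ) u) = 0 := by
        rw [intervalIntegral.integral_congr_ae (g := fun _ => (0 : ℝ))
          (Filter.Eventually.of_forall fun u hu => by
            rw [Set.uIoc_of_le hyzle] at hu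
            exact Set.indicator_of_notMem (by simp only [Set.mem_Iio, not_lt]; exact hu.1.le) _),
          intervalIntegral.integral_const, smul_zero]
      rw [← hsplit, e1, e2, max_eq_left (by linarith)]
      ring


/-- The function `q(y,x) = (1/2) m({y}) |x−y| + ∫_y^x m((y,u)) du`. -/
noncomputable def qFun (m : Measure ℝ) (y x : ℝ) : ℝ :=
  (1 / 2) * (m {y}).toReal * |x - y| + ∫ u in y..x, signedIoo m y u

theorem q_translation_formula (m : Measure ℝ) [IsFiniteMeasureOnCompacts m]
    (y z x : ℝ) (hyz : y < z) :
    qFun m z x = qFun m y x - qFun m y z -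
      ((m (Set.Ioo y z)).toReal + (1 / 2) * (m {y}).toReal
        + (1 / 2) * (m {z}).toReal) * (x - z) := by
  set c₀ := (m (Set.Ioo y z)).toReal
  set my := (m {y}).toReal
  set mz := (m {z}).toReal
  have hsplit : (∫ u in y..x, signedIoo m y u)
      = (∫ u in y..z, signedIoo m y u) + ∫ u in z..x, signedIoo m y u :=
    (intervalIntegral.integral_add_adjacent_intervals
      (signedIoo_integrable m y y z) (signedIoo_integrable m y z x)).symm
  have A : IntervalIntegrable (signedIoo m z) volume z x := signedIoo_integrable m z z x
  have B : IntervalIntegrable (fun _ : ℝ => c₀) volume z x := intervalIntegrable_const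
  have C : IntervalIntegrable (fun u => mz * (Set.Ioi z).indicator (1 : ℝ → ℝ) u) volume z x :=
    (((ind_Ioi_mono z).monotoneOn _).intervalIntegrable).const_mul mz
  have D : IntervalIntegrable (fun u => my * (Set.Iio y).indicator (1 : ℝ → ℝ) u) volume z x :=
    (((ind_Iio_anti y).antitoneOn _).intervalIntegrable).const_mul my
  have hmain : (∫ u in z..x, signedIoo m y u)
      = (∫ u in z..x, signedIoo m z u) + c₀ * (x - z)
        + mz * max (x - z) 0 + my * (-(max (y - x) 0)) := by
    rw [intervalIntegral.integral_congr_ae ((key_ae m hyz).mono fun u hu _ => hu)]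
    rw [intervalIntegral.integral_add ((A.add B).add C) D,
      intervalIntegral.integral_add (A.add B) C,
      intervalIntegral.integral_add A B,
      intervalIntegral.integral_const, intervalIntegral.integral_const_mul,
      intervalIntegral.integral_const_mul, int_ind_Ioi, int_ind_Iio y z x hyz]
    rw [smul_eq_mul, mul_comm]
  have habs : |z - y| = z - y := abs_of_pos (by linarith)
  have hmax1 : max (x - z) 0 = (|x - z| + (x - z)) / 2 := by
    rcases le_total (x - z) 0 with h | h
    · rw [max_eq_right h, abs_of_nonpos h]; ring
    · rw [max_eq_left h, abs_of_nonneg h]; ring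
  have hmax2 : max (y - x) 0 = (|x - y| - (x - y)) / 2 := by
    rcases le_total (x - y) 0 with h | h
    · rw [max_eq_left (by linarith), abs_of_nonpos h]; ring
    · rw [max_eq_right (by linarith), abs_of_nonneg h]; ring
  unfold qFun
  rw [hsplit, hmain, habs, hmax1, hmax2]
  ring
end

section
/- Let m be a Borel measure on ℝ that is finite on compact sets, and let q be the associated function. Then for every y ∈ ℝ and every a ≥ 0, one has ∫_ℝ (a − |u − y|)⁺ m(du) = q(y, y−a) + q(y, y+a), where (·)⁺ denotes the positive part. -/
open MeasureTheory

open scoped ENNReal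


lemma key1_lintegral (m : Measure ℝ) [IsFiniteMeasureOnCompacts m] (c d : ℝ) :
    ∫⁻ u in Set.Ioc c d, m (Set.Ioo c u) = ∫⁻ v in Set.Ioo c d, ENNReal.ofReal (d - v) ∂m := by
  set f : ℝ → ℝ → ℝ≥0∞ := fun u v => if c < v ∧ v < u then 1 else 0 with hf
  have hS : MeasurableSet {p : ℝ × ℝ | c < p.2 ∧ p.2 < p.1} :=
    (measurableSet_lt measurable_const measurable_snd).inter
      (measurableSet_lt measurable_snd measurable_fst)
  have hmeas : Measurable (Function.uncurry f) := by
    have : Function.uncurry f = fun p : ℝ × ℝ => if p ∈ {p : ℝ × ℝ | c < p.2 ∧ p.2 < p.1} then (1 : ℝ≥0∞) else 0 := rfl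
    rw [this]
    exact Measurable.ite hS measurable_const measurable_const
  have h1 : ∀ u : ℝ, m (Set.Ioo c u) = ∫⁻ v, f u v ∂m := by
    intro u
    have : f u = (Set.Ioo c u).indicator (fun _ => 1) := by
      ext v; by_cases hv : v ∈ Set.Ioo c u
      · simp [hf, Set.mem_Ioo.1 hv, Set.indicator_of_mem hv]
      · rw [Set.indicator_of_notMem hv]
        simp only [hf]
        rw [if_neg (by simpa [Set.mem_Ioo] using hv)]
    rw [this, lintegral_indicator measurableSet_Ioo, setLIntegral_one]
  calc ∫⁻ u in Set.Ioc c d, m (Set.Ioo c u)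
      = ∫⁻ u in Set.Ioc c d, ∫⁻ v, f u v ∂m := by simp_rw [h1]
    _ = ∫⁻ v, (∫⁻ u in Set.Ioc c d, f u v) ∂m :=
        lintegral_lintegral_swap (hmeas.aemeasurable)
    _ = ∫⁻ v, (Set.Ioo c d).indicator (fun v => ENNReal.ofReal (d - v)) v ∂m := by
        refine lintegral_congr fun v => ?_
        by_cases hv : c < v
        · have hfv : (fun u => f u v) = (Set.Ioi v).indicator (fun _ => 1) := by
            ext u; by_cases hu : v < u
            · simp [hf, hv, hu, Set.indicator_of_mem (Set.mem_Ioi.2 hu)]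
            · rw [Set.indicator_of_notMem (by simpa using hu)]
              simp [hf, hu]
          rw [hfv, lintegral_indicator measurableSet_Ioi, setLIntegral_one,
            Measure.restrict_apply measurableSet_Ioi]
          have : Set.Ioi v ∩ Set.Ioc c d = Set.Ioc v d := by
            ext x
            simp only [Set.mem_inter_iff, Set.mem_Ioi, Set.mem_Ioc]
            exact ⟨fun h => ⟨h.1, h.2.2⟩, fun h => ⟨h.1, lt_trans hv h.1, h.2⟩⟩
          rw [this, Real.volume_Ioc]
          by_cases hvd : v < d
          · rw [Set.indicator_of_mem (Set.mem_Ioo.2 ⟨hv, hvd⟩)]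
          · rw [Set.indicator_of_notMem (by simp [Set.mem_Ioo, hvd])]
            simp [ENNReal.ofReal_eq_zero, sub_nonpos, le_of_not_gt hvd]
        · have hfv : ∀ u, f u v = 0 := fun u => if_neg (by tauto)
          simp only [hfv, lintegral_zero]
          rw [Set.indicator_of_notMem (by simp [Set.mem_Ioo, hv])]
    _ = ∫⁻ v in Set.Ioo c d, ENNReal.ofReal (d - v) ∂m := by
        rw [lintegral_indicator measurableSet_Ioo]
lemma key2_lintegral (m : Measure ℝ) [IsFiniteMeasureOnCompacts m] (c d : ℝ) :
    ∫⁻ u in Set.Ioc c d, m (Set.Ioo u d) = ∫⁻ v in Set.Ioo c d, ENNReal.ofReal (v - c) ∂m := by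
  set f : ℝ → ℝ → ℝ≥0∞ := fun u v => if u < v ∧ v < d then 1 else 0 with hf
  have hS : MeasurableSet {p : ℝ × ℝ | p.1 < p.2 ∧ p.2 < d} :=
    (measurableSet_lt measurable_fst measurable_snd).inter
      (measurableSet_lt measurable_snd measurable_const)
  have hmeas : Measurable (Function.uncurry f) := by
    have : Function.uncurry f = fun p : ℝ × ℝ => if p ∈ {p : ℝ × ℝ | p.1 < p.2 ∧ p.2 < d} then (1 : ℝ≥0∞) else 0 := rfl
    rw [this]
    exact Measurable.ite hS measurable_const measurable_const
  have h1 : ∀ u : ℝ, m (Set.Ioo u d) = ∫⁻ v, f u v ∂m := by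
    intro u
    have : f u = (Set.Ioo u d).indicator (fun _ => 1) := by
      ext v; by_cases hv : v ∈ Set.Ioo u d
      · simp [hf, Set.mem_Ioo.1 hv, Set.indicator_of_mem hv]
      · rw [Set.indicator_of_notMem hv]
        simp only [hf]
        rw [if_neg (by simpa [Set.mem_Ioo] using hv)]
    rw [this, lintegral_indicator measurableSet_Ioo, setLIntegral_one]
  calc ∫⁻ u in Set.Ioc c d, m (Set.Ioo u d)
      = ∫⁻ u in Set.Ioc c d, ∫⁻ v, f u v ∂m := by simp_rw [h1]
    _ = ∫⁻ v, (∫⁻ u in Set.Ioc c d, f u v) ∂m :=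
        lintegral_lintegral_swap (hmeas.aemeasurable)
    _ = ∫⁻ v, (Set.Ioo c d).indicator (fun v => ENNReal.ofReal (v - c)) v ∂m := by
        refine lintegral_congr fun v => ?_
        by_cases hv : v < d
        · have hfv : (fun u => f u v) = (Set.Iio v).indicator (fun _ => 1) := by
            ext u; by_cases hu : u < v
            · simp [hf, hv, hu, Set.indicator_of_mem (Set.mem_Iio.2 hu)]
            · rw [Set.indicator_of_notMem (by simpa using hu)]
              simp [hf, hu]
          rw [hfv, lintegral_indicator measurableSet_Iio, setLIntegral_one,
            Measure.restrict_apply measurableSet_Iio]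
          have : Set.Iio v ∩ Set.Ioc c d = Set.Ioo c v := by
            ext x
            simp only [Set.mem_inter_iff, Set.mem_Iio, Set.mem_Ioc, Set.mem_Ioo]
            exact ⟨fun h => ⟨h.2.1, h.1⟩, fun h => ⟨h.2, h.1, le_of_lt (lt_trans h.2 hv)⟩⟩
          rw [this, Real.volume_Ioo]
          by_cases hcv : c < v
          · rw [Set.indicator_of_mem (Set.mem_Ioo.2 ⟨hcv, hv⟩)]
          · rw [Set.indicator_of_notMem (by simp [Set.mem_Ioo, hcv])]
            simp [ENNReal.ofReal_eq_zero, sub_nonpos, le_of_not_gt hcv]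
        · have hfv : ∀ u, f u v = 0 := fun u => if_neg (by tauto)
          simp only [hfv, lintegral_zero]
          rw [Set.indicator_of_notMem (by simp [Set.mem_Ioo, hv])]
    _ = ∫⁻ v in Set.Ioo c d, ENNReal.ofReal (v - c) ∂m := by
        rw [lintegral_indicator measurableSet_Ioo]

lemma key1_integral (m : Measure ℝ) [IsFiniteMeasureOnCompacts m] {c d : ℝ} (h : c ≤ d) :
    ∫ u in c..d, (m (Set.Ioo c u)).toReal = ∫ v in Set.Ioo c d, (d - v) ∂m := by
  have hmono : Monotone (fun u => m (Set.Ioo c u)) := fun u1 u2 h12 =>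
    measure_mono (Set.Ioo_subset_Ioo le_rfl h12)
  have hIoo : m (Set.Ioo c d) < ⊤ :=
    lt_of_le_of_lt (measure_mono Set.Ioo_subset_Icc_self) isCompact_Icc.measure_lt_top
  have h3 : ∫ u in Set.Ioc c d, (m (Set.Ioo c u)).toReal
      = (∫⁻ u in Set.Ioc c d, m (Set.Ioo c u)).toReal := by
    refine integral_toReal hmono.measurable.aemeasurable ?_
    filter_upwards [ae_restrict_mem measurableSet_Ioc] with u hu
    exact lt_of_le_of_lt (measure_mono (Set.Ioo_subset_Ioo le_rfl hu.2)) hIoo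
  have h2 : ∫ v in Set.Ioo c d, (d - v) ∂m
      = (∫⁻ v in Set.Ioo c d, ENNReal.ofReal (d - v) ∂m).toReal := by
    rw [integral_eq_lintegral_of_nonneg_ae]
    · filter_upwards [ae_restrict_mem measurableSet_Ioo] with v hv
      simp only [Pi.zero_apply]
      linarith [hv.2]
    · exact (continuous_const.sub continuous_id).aestronglyMeasurable
  rw [intervalIntegral.integral_of_le h, h3, h2, key1_lintegral]

lemma key2_integral (m : Measure ℝ) [IsFiniteMeasureOnCompacts m] {c d : ℝ} (h : c ≤ d) :
    ∫ u in c..d, (m (Set.Ioo u d)).toReal = ∫ v in Set.Ioo c d, (v - c) ∂m := by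
  have hmono : Antitone (fun u => m (Set.Ioo u d)) := fun u1 u2 h12 =>
    measure_mono (Set.Ioo_subset_Ioo h12 le_rfl)
  have hIoo : m (Set.Ioo c d) < ⊤ :=
    lt_of_le_of_lt (measure_mono Set.Ioo_subset_Icc_self) isCompact_Icc.measure_lt_top
  have h3 : ∫ u in Set.Ioc c d, (m (Set.Ioo u d)).toReal
      = (∫⁻ u in Set.Ioc c d, m (Set.Ioo u d)).toReal := by
    refine integral_toReal hmono.measurable.aemeasurable ?_
    filter_upwards [ae_restrict_mem measurableSet_Ioc] with u hu
    exact lt_of_le_of_lt (measure_mono (Set.Ioo_subset_Ioo (le_of_lt hu.1) le_rfl)) hIoo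
  have h2 : ∫ v in Set.Ioo c d, (v - c) ∂m
      = (∫⁻ v in Set.Ioo c d, ENNReal.ofReal (v - c) ∂m).toReal := by
    rw [integral_eq_lintegral_of_nonneg_ae]
    · filter_upwards [ae_restrict_mem measurableSet_Ioo] with v hv
      simp only [Pi.zero_apply]
      linarith [hv.1]
    · exact (continuous_id.sub continuous_const).aestronglyMeasurable
  rw [intervalIntegral.integral_of_le h, h3, h2, key2_lintegral]

theorem integral_posPart_eq_q_add_q (m : Measure ℝ) [IsFiniteMeasureOnCompacts m]
    (y a : ℝ) (ha : 0 ≤ a) :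
    ∫ u, max (a - |u - y|) 0 ∂m = qFun m y (y - a) + qFun m y (y + a) := by
  rcases ha.eq_or_lt with rfl | ha'
  · have : (fun u : ℝ => max (0 - |u - y|) 0) = fun _ => 0 := by
      ext u
      refine max_eq_right ?_
      have := abs_nonneg (u - y)
      linarith
    simp [this, qFun]
  -- main case a > 0
  set f : ℝ → ℝ := fun u => max (a - |u - y|) 0 with hfdef
  have hfcont : Continuous f := (continuous_const.sub (continuous_id.sub continuous_const).abs).max continuous_const
  have hfzero : ∀ x : ℝ, x ∉ Set.Ioo (y - a) (y + a) → f x = 0 := by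
    intro x hx
    rw [Set.mem_Ioo, not_and_or, not_lt, not_lt] at hx
    have h1 := le_abs_self (x - y)
    have h2 := neg_abs_le (x - y)
    refine max_eq_right ?_
    rcases hx with h | h <;> linarith
  have hfsupp : HasCompactSupport f := by
    refine HasCompactSupport.intro (isCompact_Icc (a := y - a) (b := y + a)) (fun x hx => hfzero x ?_)
    intro hx'
    exact hx (Set.Ioo_subset_Icc_self hx')
  have hint : Integrable f m := hfcont.integrable_of_hasCompactSupport hfsupp
  -- reduce to integral over Ioo (y - a) (y + a)
  have hred : ∫ u, f u ∂m = ∫ u in Set.Ioo (y - a) (y + a), f u ∂m :=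
    (setIntegral_eq_integral_of_forall_compl_eq_zero (fun x hx => hfzero x hx)).symm
  -- split the interval
  have hsplit : Set.Ioo (y - a) (y + a) = Set.Ioo (y - a) y ∪ ({y} ∪ Set.Ioo y (y + a)) := by
    ext x
    simp only [Set.mem_Ioo, Set.mem_union, Set.mem_singleton_iff]
    constructor
    · rintro ⟨h1, h2⟩
      rcases lt_trichotomy x y with h | h | h
      · exact Or.inl ⟨h1, h⟩
      · exact Or.inr (Or.inl h)
      · exact Or.inr (Or.inr ⟨h, h2⟩)
    · rintro (⟨h1, h2⟩ | rfl | ⟨h1, h2⟩) <;> constructor <;> linarith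
  have hdisj1 : Disjoint (Set.Ioo (y - a) y) ({y} ∪ Set.Ioo y (y + a)) := by
    rw [Set.disjoint_left]
    rintro x ⟨h1, h2⟩ (rfl | ⟨h3, h4⟩) <;> linarith
  have hdisj2 : Disjoint ({y} : Set ℝ) (Set.Ioo y (y + a)) := by
    rw [Set.disjoint_left]
    rintro x rfl ⟨h3, h4⟩; linarith
  have hmeas2 : MeasurableSet ({y} ∪ Set.Ioo y (y + a) : Set ℝ) :=
    (measurableSet_singleton y).union measurableSet_Ioo
  have hIO : ∀ s : Set ℝ, IntegrableOn f s m := fun s => hint.integrableOn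
  have hunion : ∫ u in Set.Ioo (y - a) (y + a), f u ∂m
      = (∫ u in Set.Ioo (y - a) y, f u ∂m)
        + ((∫ u in {y}, f u ∂m) + ∫ u in Set.Ioo y (y + a), f u ∂m) := by
    rw [hsplit, setIntegral_union hdisj1 hmeas2 (hIO _) (hIO _),
      setIntegral_union hdisj2 measurableSet_Ioo (hIO _) (hIO _)]
  -- identify the three pieces
  have hpiece1 : ∫ u in Set.Ioo (y - a) y, f u ∂m
      = ∫ v in Set.Ioo (y - a) y, (v - (y - a)) ∂m := by
    refine setIntegral_congr_fun measurableSet_Ioo (fun x hx => ?_)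
    obtain ⟨h1, h2⟩ := hx
    have habs : |x - y| = y - x := by rw [abs_of_nonpos (by linarith)]; ring
    simp only [hfdef, habs]
    rw [max_eq_left (by linarith)]
    ring
  have hpiece2 : ∫ u in ({y} : Set ℝ), f u ∂m = (m {y}).toReal * a := by
    rw [integral_singleton]
    simp only [hfdef, sub_self, abs_zero, sub_zero, smul_eq_mul]
    rw [max_eq_left (le_of_lt ha')]
    rfl
  have hpiece3 : ∫ u in Set.Ioo y (y + a), f u ∂m
      = ∫ v in Set.Ioo y (y + a), ((y + a) - v) ∂m := by
    refine setIntegral_congr_fun measurableSet_Ioo (fun x hx => ?_)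
    obtain ⟨h1, h2⟩ := hx
    have habs : |x - y| = x - y := abs_of_nonneg (by linarith)
    simp only [hfdef, habs]
    rw [max_eq_left (by linarith)]
    ring
  -- compute the q-side
  have hq1 : ∫ u in y..(y + a), signedIoo m y u
      = ∫ v in Set.Ioo y (y + a), ((y + a) - v) ∂m := by
    rw [← key1_integral m (by linarith : y ≤ y + a)]
    refine intervalIntegral.integral_congr (fun u hu => ?_)
    rw [Set.uIcc_of_le (by linarith : y ≤ y + a)] at hu
    exact if_pos hu.1
  have hq2 : ∫ u in y..(y - a), signedIoo m y u
      = ∫ v in Set.Ioo (y - a) y, (v - (y - a)) ∂m := by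
    rw [intervalIntegral.integral_symm]
    have hcg : ∫ u in (y - a)..y, signedIoo m y u
        = ∫ u in (y - a)..y, -((m (Set.Ioo u y)).toReal) := by
      refine intervalIntegral.integral_congr (fun u hu => ?_)
      rw [Set.uIcc_of_le (by linarith : y - a ≤ y)] at hu
      by_cases h : y ≤ u
      · have : u = y := le_antisymm hu.2 h
        subst this
        simp [signedIoo]
      · exact if_neg h
    rw [hcg, intervalIntegral.integral_neg, neg_neg,
      key2_integral m (by linarith : y - a ≤ y)]
  have habs1 : |y - a - y| = a := by rw [abs_of_nonpos (by linarith)]; ring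
  have habs2 : |y + a - y| = a := by rw [abs_of_nonneg (by linarith)]; ring
  rw [hred, hunion, hpiece1, hpiece2, hpiece3]
  simp only [qFun, habs1, habs2, hq1, hq2]
  ring
end

section
/- Let m be a Borel measure on ℝ such that 0 < m([a,b]) < ∞ for all real a < b, let y ∈ ℝ and a₀ > 0. Then the function [0,a₀] ∋ a ↦ (1/2) ∫_ℝ (a − |u − y|)⁺ m(du) is continuous, strictly increasing, and equals 0 at a = 0. Consequently, for every h with 0 < h ≤ (1/2) ∫_ℝ (a₀ − |u − y|)⁺ m(du), there exists a unique a ∈ (0, a₀] satisfying (1/2) ∫_ℝ (a − |u − y|)⁺ m(du) = h. -/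
open MeasureTheory Set

lemma aux_finiteOnCompacts (m : Measure ℝ)
    (hm : ∀ a b : ℝ, a < b → 0 < m (Set.Icc a b) ∧ m (Set.Icc a b) < ⊤) :
    IsFiniteMeasureOnCompacts m := by
  constructor
  intro K hK
  obtain ⟨R, hR⟩ := hK.isBounded.subset_closedBall 0
  have hsub : K ⊆ Set.Icc (-(|R| + 1)) (|R| + 1) := by
    refine hR.trans ?_
    rw [Real.closedBall_eq_Icc]
    apply Set.Icc_subset_Icc <;> simp <;> linarith [le_abs_self R, neg_abs_le R]
  exact lt_of_le_of_lt (measure_mono hsub)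
    (hm _ _ (by linarith [abs_nonneg R])).2

lemma aux_integrable (m : Measure ℝ) [IsFiniteMeasureOnCompacts m] (y a : ℝ) :
    Integrable (fun u => max (a - |u - y|) 0) m := by
  apply Continuous.integrable_of_hasCompactSupport
  · fun_prop
  · apply HasCompactSupport.intro (isCompact_Icc (a := y - |a|) (b := y + |a|))
    intro x hx
    simp only [Set.mem_Icc, not_and_or, not_le] at hx
    have h1 : |a| < |x - y| := by
      rcases hx with h | h
      · calc |a| < y - x := by linarith
          _ ≤ |x - y| := by rw [abs_sub_comm]; exact le_abs_self _
      · calc |a| < x - y := by linarith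
          _ ≤ |x - y| := le_abs_self _
    have : a - |x - y| ≤ 0 := by linarith [le_abs_self a]
    exact max_eq_right this

theorem strictMono_and_unique_solution_expected_exit_time
    (m : Measure ℝ)
    (hm : ∀ a b : ℝ, a < b → 0 < m (Set.Icc a b) ∧ m (Set.Icc a b) < ⊤)
    (y a₀ : ℝ) (ha₀ : 0 < a₀) :
    ContinuousOn (fun a : ℝ => (1 / 2) * ∫ u, max (a - |u - y|) 0 ∂m)
      (Set.Icc 0 a₀) ∧
    StrictMonoOn (fun a : ℝ => (1 / 2) * ∫ u, max (a - |u - y|) 0 ∂m)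
      (Set.Icc 0 a₀) ∧
    (1 / 2) * (∫ u, max ((0 : ℝ) - |u - y|) 0 ∂m) = 0 ∧
    ∀ h : ℝ, 0 < h → h ≤ (1 / 2) * ∫ u, max (a₀ - |u - y|) 0 ∂m →
      ∃! a : ℝ, a ∈ Set.Ioc 0 a₀ ∧ (1 / 2) * ∫ u, max (a - |u - y|) 0 ∂m = h := by
  haveI : IsFiniteMeasureOnCompacts m := aux_finiteOnCompacts m hm
  set F : ℝ → ℝ := fun a => (1 / 2) * ∫ u, max (a - |u - y|) 0 ∂m with hF
  have hInt : ∀ a : ℝ, Integrable (fun u => max (a - |u - y|) 0) m :=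
    fun a => aux_integrable m y a
  -- continuity
  have hcont : ContinuousOn F (Set.Icc 0 a₀) := by
    have hG : Continuous (fun a : ℝ => ∫ u, max (min a a₀ - |u - y|) 0 ∂m) := by
      apply continuous_of_dominated
        (bound := fun u => max (a₀ - |u - y|) 0)
      · intro a
        exact ((hInt (min a a₀)).aestronglyMeasurable)
      · intro a
        filter_upwards with u
        rw [Real.norm_eq_abs, abs_of_nonneg (le_max_right _ _)]
        exact max_le_max (by linarith [min_le_right a a₀]) le_rfl
      · exact hInt a₀
      · filter_upwards with u
        fun_prop
    have : ContinuousOn (fun a : ℝ => (1/2) * ∫ u, max (min a a₀ - |u - y|) 0 ∂m)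
        (Set.Icc 0 a₀) := (continuous_const.mul hG).continuousOn
    refine this.congr ?_
    intro a ha
    simp only [hF, min_eq_left ha.2]
  -- strict mono
  have hmono : StrictMonoOn F (Set.Icc 0 a₀) := by
    intro a ha b hb hab
    set c := (b - a) / 2 with hc
    have hc0 : 0 < c := by simp [hc]; linarith
    have hsub : ∀ u ∈ Set.Icc (y - c) (y + c),
        c ≤ max (b - |u - y|) 0 - max (a - |u - y|) 0 := by
      intro u hu
      have ht : |u - y| ≤ c := abs_le.2 ⟨by linarith [hu.1], by linarith [hu.2]⟩
      rcases le_or_gt (|u - y|) a with h | h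
      · rw [max_eq_left (by linarith), max_eq_left (by linarith)]
        linarith
      · rw [max_eq_left (by linarith [ha.1]), max_eq_right (by linarith)]
        have : 0 ≤ a := ha.1
        linarith
    have hInt' : Integrable (fun u => max (b - |u - y|) 0 - max (a - |u - y|) 0) m :=
      (hInt b).sub (hInt a)
    have hμ : 0 < (m (Set.Icc (y - c) (y + c))).toReal := by
      have h := hm (y - c) (y + c) (by linarith)
      exact ENNReal.toReal_pos h.1.ne' h.2.ne
    have hlow : c * (m (Set.Icc (y - c) (y + c))).toReal ≤
        ∫ u in Set.Icc (y - c) (y + c),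
          (max (b - |u - y|) 0 - max (a - |u - y|) 0) ∂m := by
      apply setIntegral_ge_of_const_le_real measurableSet_Icc
        (hm (y - c) (y + c) (by linarith)).2.ne hsub hInt'.integrableOn
    have hpos : 0 ≤ᵐ[m] fun u => max (b - |u - y|) 0 - max (a - |u - y|) 0 := by
      filter_upwards with u
      have : max (a - |u - y|) 0 ≤ max (b - |u - y|) 0 :=
        max_le_max (by linarith) le_rfl
      simpa using this
    have hset : ∫ u in Set.Icc (y - c) (y + c),
          (max (b - |u - y|) 0 - max (a - |u - y|) 0) ∂m ≤
        ∫ u, (max (b - |u - y|) 0 - max (a - |u - y|) 0) ∂m :=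
      setIntegral_le_integral hInt' hpos
    have hdiff : 0 < ∫ u, (max (b - |u - y|) 0 - max (a - |u - y|) 0) ∂m := by
      calc (0:ℝ) < c * (m (Set.Icc (y - c) (y + c))).toReal := by positivity
        _ ≤ _ := hlow.trans hset
    rw [integral_sub (hInt b) (hInt a)] at hdiff
    simp only [hF]
    nlinarith
  -- F 0 = 0
  have hzero : F 0 = 0 := by
    have : (fun u : ℝ => max ((0:ℝ) - |u - y|) 0) = fun _ => (0:ℝ) := by
      funext u
      exact max_eq_right (by simp [abs_nonneg])
    simp only [hF, this, integral_zero, mul_zero]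
  refine ⟨hcont, hmono, hzero, ?_⟩
  intro h h0 hle
  have hmem : h ∈ Set.Icc (F 0) (F a₀) := ⟨by rw [hzero]; exact h0.le, hle⟩
  obtain ⟨a, ha, hfa⟩ := intermediate_value_Icc ha₀.le hcont hmem
  have hane : a ≠ 0 := by
    intro h'
    rw [h', hzero] at hfa
    exact h0.ne hfa
  refine ⟨a, ⟨⟨lt_of_le_of_ne ha.1 (Ne.symm hane), ha.2⟩, hfa⟩, ?_⟩
  rintro b ⟨hb, hfb⟩
  exact hmono.injOn (Set.Ioc_subset_Icc_self.trans Set.Subset.rfl hb) ha (hfb.trans hfa.symm)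
end

section
/- Let σ > 0, h > 0 and y > 0, and set a = y·√(1 − e^{−σ² h}). Then 0 < a < y and a² · ∫_{−1}^{1} (1 − |z|) / (σ² (y + a z)²) dz = h. -/
theorem emcel_scale_factor_gbm (σ h y : ℝ) (hσ : 0 < σ) (hh : 0 < h) (hy : 0 < y)
    (a : ℝ) (ha : a = y * Real.sqrt (1 - Real.exp (-σ^2 * h))) :
    0 < a ∧ a < y ∧
      a^2 * ∫ z in (-1 : ℝ)..1, (1 - |z|) / (σ^2 * (y + a * z)^2) = h := by
  have hσ2 : 0 < σ^2 := by positivity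
  have hc0 : 0 < Real.exp (-σ^2 * h) := Real.exp_pos _
  have hc1 : Real.exp (-σ^2 * h) < 1 := by
    rw [Real.exp_lt_one_iff]; nlinarith
  have h1c : 0 < 1 - Real.exp (-σ^2 * h) := by linarith
  have hs0 : 0 < Real.sqrt (1 - Real.exp (-σ^2 * h)) := Real.sqrt_pos.mpr h1c
  have hs1 : Real.sqrt (1 - Real.exp (-σ^2 * h)) < 1 := by
    nlinarith [Real.sq_sqrt h1c.le, hs0, hc0]
  have ha0 : 0 < a := by rw [ha]; positivity
  have hay : a < y := by rw [ha]; nlinarith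
  have ha2 : a^2 = y^2 * (1 - Real.exp (-σ^2 * h)) := by
    rw [ha, mul_pow, Real.sq_sqrt h1c.le]
  have hpos : ∀ z ∈ Set.Icc (-1:ℝ) 1, 0 < y + a * z := by
    intro z hz; nlinarith [hz.1, hz.2]
  have hlin : ∀ z : ℝ, HasDerivAt (fun t => y + a * t) a z := by
    intro z
    simpa using ((hasDerivAt_id z).const_mul a).const_add y
  -- antiderivative on [0,1]
  have hG : ∀ z ∈ Set.uIcc (0:ℝ) 1,
      HasDerivAt (fun t => (-(a+y)/(y+a*t) - Real.log (y+a*t)) / (a^2*σ^2))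
        ((1 - z)/(σ^2*(y+a*z)^2)) z := by
    intro z hz
    rw [Set.uIcc_of_le (by norm_num : (0:ℝ) ≤ 1)] at hz
    have hzpos : 0 < y + a * z := hpos z ⟨by linarith [hz.1], hz.2⟩
    have h1 := hlin z
    have h2 := (hasDerivAt_const z (-(a+y))).div h1 hzpos.ne'
    have h3 := h1.log hzpos.ne'
    have h4 := (h2.sub h3).div_const (a^2*σ^2)
    refine HasDerivAt.congr_deriv h4 ?_
    field_simp
    ring
  -- antiderivative on [-1,0]
  have hH : ∀ z ∈ Set.uIcc (-1:ℝ) 0,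
      HasDerivAt (fun t => (Real.log (y+a*t) + (y-a)/(y+a*t)) / (a^2*σ^2))
        ((1 + z)/(σ^2*(y+a*z)^2)) z := by
    intro z hz
    rw [Set.uIcc_of_le (by norm_num : (-1:ℝ) ≤ 0)] at hz
    have hzpos : 0 < y + a * z := hpos z ⟨hz.1, by linarith [hz.2]⟩
    have h1 := hlin z
    have h2 := (hasDerivAt_const z (y-a)).div h1 hzpos.ne'
    have h3 := h1.log hzpos.ne'
    have h4 := (h3.add h2).div_const (a^2*σ^2)
    refine HasDerivAt.congr_deriv h4 ?_
    field_simp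
    ring
  have hne : ∀ z ∈ Set.Icc (-1:ℝ) 1, σ^2*(y+a*z)^2 ≠ 0 := by
    intro z hz
    have := hpos z hz
    positivity
  have hcont1 : ContinuousOn (fun z => (1 - z)/(σ^2*(y+a*z)^2)) (Set.uIcc (0:ℝ) 1) := by
    apply ContinuousOn.div (by fun_prop) (by fun_prop)
    intro z hz
    rw [Set.uIcc_of_le (by norm_num : (0:ℝ) ≤ 1)] at hz
    exact hne z ⟨by linarith [hz.1], hz.2⟩
  have hcont2 : ContinuousOn (fun z => (1 + z)/(σ^2*(y+a*z)^2)) (Set.uIcc (-1:ℝ) 0) := by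
    apply ContinuousOn.div (by fun_prop) (by fun_prop)
    intro z hz
    rw [Set.uIcc_of_le (by norm_num : (-1:ℝ) ≤ 0)] at hz
    exact hne z ⟨hz.1, by linarith [hz.2]⟩
  have I1 : ∫ z in (0:ℝ)..1, (1 - z)/(σ^2*(y+a*z)^2) =
      (-(a+y)/(y+a*1) - Real.log (y+a*1)) / (a^2*σ^2)
      - (-(a+y)/(y+a*0) - Real.log (y+a*0)) / (a^2*σ^2) :=
    intervalIntegral.integral_eq_sub_of_hasDerivAt hG hcont1.intervalIntegrable
  have I2 : ∫ z in (-1:ℝ)..0, (1 + z)/(σ^2*(y+a*z)^2) =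
      (Real.log (y+a*0) + (y-a)/(y+a*0)) / (a^2*σ^2)
      - (Real.log (y+a*(-1)) + (y-a)/(y+a*(-1))) / (a^2*σ^2) :=
    intervalIntegral.integral_eq_sub_of_hasDerivAt hH hcont2.intervalIntegrable
  have e1 : ∫ z in (0:ℝ)..1, (1 - |z|)/(σ^2*(y+a*z)^2)
      = ∫ z in (0:ℝ)..1, (1 - z)/(σ^2*(y+a*z)^2) := by
    apply intervalIntegral.integral_congr
    intro z hz
    rw [Set.uIcc_of_le (by norm_num : (0:ℝ) ≤ 1)] at hz
    simp only [abs_of_nonneg hz.1]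
  have e2 : ∫ z in (-1:ℝ)..0, (1 - |z|)/(σ^2*(y+a*z)^2)
      = ∫ z in (-1:ℝ)..0, (1 + z)/(σ^2*(y+a*z)^2) := by
    apply intervalIntegral.integral_congr
    intro z hz
    rw [Set.uIcc_of_le (by norm_num : (-1:ℝ) ≤ 0)] at hz
    simp only [abs_of_nonpos hz.2, sub_neg_eq_add]
  have habs : ContinuousOn (fun z => (1 - |z|)/(σ^2*(y+a*z)^2)) (Set.Icc (-1:ℝ) 1) := by
    apply ContinuousOn.div (by fun_prop) (by fun_prop)
    exact hne
  have hint1 : IntervalIntegrable (fun z => (1 - |z|)/(σ^2*(y+a*z)^2)) MeasureTheory.volume (-1) 0 := by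
    apply ContinuousOn.intervalIntegrable
    apply habs.mono
    rw [Set.uIcc_of_le (by norm_num : (-1:ℝ) ≤ 0)]
    exact Set.Icc_subset_Icc le_rfl (by norm_num)
  have hint2 : IntervalIntegrable (fun z => (1 - |z|)/(σ^2*(y+a*z)^2)) MeasureTheory.volume 0 1 := by
    apply ContinuousOn.intervalIntegrable
    apply habs.mono
    rw [Set.uIcc_of_le (by norm_num : (0:ℝ) ≤ 1)]
    exact Set.Icc_subset_Icc (by norm_num) le_rfl
  have hsplit : ∫ z in (-1:ℝ)..1, (1 - |z|)/(σ^2*(y+a*z)^2)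
      = (∫ z in (-1:ℝ)..0, (1 - |z|)/(σ^2*(y+a*z)^2))
        + ∫ z in (0:ℝ)..1, (1 - |z|)/(σ^2*(y+a*z)^2) :=
    (intervalIntegral.integral_add_adjacent_intervals hint1 hint2).symm
  refine ⟨ha0, hay, ?_⟩
  rw [hsplit, e1, e2, I1, I2]
  have hya : 0 < y - a := by linarith
  have hprod : (y + a) * (y - a) = y^2 * Real.exp (-σ^2 * h) := by nlinarith
  have hlog : Real.log (y + a) + Real.log (y - a) = 2 * Real.log y - σ^2 * h := by
    rw [← Real.log_mul (by positivity) (by positivity), hprod,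
      Real.log_mul (by positivity) hc0.ne', Real.log_exp, Real.log_pow]
    push_cast; ring
  have hane : a ≠ 0 := ha0.ne'
  have hyne : y ≠ 0 := hy.ne'
  have hσne : σ ≠ 0 := hσ.ne'
  have h1 : y + a * 1 = y + a := by ring
  have h0 : y + a * 0 = y := by ring
  have hm1 : y + a * (-1) = y - a := by ring
  rw [h1, h0, hm1]
  have hyane : (0:ℝ) < y + a := by positivity
  set D := a^2*σ^2 with hD
  have hDne : D ≠ 0 := by positivity
  have comb : ∀ A B C E : ℝ, A/D - B/D + (C/D - E/D) = (A - B + (C - E))/D := by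
    intro A B C E; ring
  rw [comb]
  have hnum : Real.log y + (y-a)/y - (Real.log (y-a) + (y-a)/(y-a))
      + (-(a+y)/(y+a) - Real.log (y+a) - (-(a+y)/y - Real.log y)) = σ^2*h := by
    rw [div_self hya.ne',
      show -(a+y)/(y+a) = -1 by
        rw [show y + a = a + y by ring, neg_div, div_self (by positivity : (a+y) ≠ 0)]]
    have h3 : (y-a)/y + (a+y)/y = 2 := by field_simp; ring
    linear_combination h3 - hlog
  rw [hnum, hD]
  field_simp
end

section
/- Let η : ℝ → ℝ be continuous with η(x) ≠ 0 for all x ∈ ℝ, and let K ⊆ ℝ be compact. Then sup_{y ∈ K} | ∫_{−1}^{1} η(y)² (1 − |z|) / η(y + √h · η(y) · z)² dz − 1 | converges to 0 as h → 0⁺. -/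
open Set Filter intervalIntegral MeasureTheory

lemma tri_int : ∫ z in (-1:ℝ)..1, (1 - |z|) = 1 := by
  have hint : ∀ a b : ℝ, IntervalIntegrable (fun z : ℝ => 1 - |z|) volume a b :=
    fun a b => (continuous_const.sub continuous_abs).intervalIntegrable a b
  have h1 : (∫ z in (-1:ℝ)..0, (1 - |z|)) = ∫ z in (-1:ℝ)..0, (1 + z) := by
    apply intervalIntegral.integral_congr
    intro z hz
    rw [Set.uIcc_of_le (by norm_num : (-1:ℝ) ≤ 0)] at hz
    show 1 - |z| = 1 + z
    rw [abs_of_nonpos hz.2]; ring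
  have h2 : (∫ z in (0:ℝ)..1, (1 - |z|)) = ∫ z in (0:ℝ)..1, (1 - z) := by
    apply intervalIntegral.integral_congr
    intro z hz
    rw [Set.uIcc_of_le (by norm_num : (0:ℝ) ≤ 1)] at hz
    show 1 - |z| = 1 - z
    rw [abs_of_nonneg hz.1]
  rw [← intervalIntegral.integral_add_adjacent_intervals (hint (-1) 0) (hint 0 1), h1, h2]
  have e1 : (∫ z in (-1:ℝ)..0, (1 + z)) = 1/2 := by
    rw [intervalIntegral.integral_add (intervalIntegrable_const)
      (intervalIntegral.intervalIntegrable_id), integral_id, intervalIntegral.integral_const]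
    norm_num
  have e2 : (∫ z in (0:ℝ)..1, (1 - z)) = 1/2 := by
    rw [intervalIntegral.integral_sub (intervalIntegrable_const)
      (intervalIntegral.intervalIntegrable_id), integral_id, intervalIntegral.integral_const]
    norm_num
  rw [e1, e2]; norm_num

theorem weak_euler_condition_A (η : ℝ → ℝ) (hcont : Continuous η)
    (hne : ∀ x : ℝ, η x ≠ 0) (K : Set ℝ) (hK : IsCompact K) :
    Filter.Tendsto
      (fun h : ℝ => ⨆ y ∈ K,
        |(∫ z in (-1 : ℝ)..1,
            (η y)^2 * (1 - |z|) / (η (y + Real.sqrt h * η y * z))^2) - 1|)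
      (nhdsWithin 0 (Set.Ioi 0)) (nhds 0) := by
  rcases K.eq_empty_or_nonempty with hKe | hKne
  · subst hKe
    simp only [Set.mem_empty_iff_false, iSup_false, Real.iSup_of_isEmpty, ciSup_const]
    exact tendsto_const_nhds
  obtain ⟨C, hC⟩ := hK.exists_bound_of_continuousOn hcont.continuousOn
  set C' : ℝ := max C 1 with hC'def
  have hC'1 : (1:ℝ) ≤ C' := le_max_right _ _
  have hC'pos : 0 < C' := lt_of_lt_of_le one_pos hC'1
  have hηK : ∀ y ∈ K, |η y| ≤ C' := fun y hy =>
    le_trans (by simpa using hC y hy) (le_max_left _ _)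
  set K' := Metric.cthickening C' K with hK'def
  have hKsub : K ⊆ K' := Metric.self_subset_cthickening K
  have hK' : IsCompact K' := hK.cthickening
  have hK'ne : K'.Nonempty := hKne.mono hKsub
  have habscont : ContinuousOn (fun x => |η x|) K' := (continuous_abs.comp hcont).continuousOn
  obtain ⟨x₀, hx₀K, hx₀min⟩ := hK'.exists_isMinOn hK'ne habscont
  obtain ⟨x₁, hx₁K, hx₁max⟩ := hK'.exists_isMaxOn hK'ne habscont
  set m := |η x₀| with hmdef
  set M := |η x₁| with hMdef
  have hm : 0 < m := abs_pos.mpr (hne x₀)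
  have hmle : ∀ x ∈ K', m ≤ |η x| := fun x hx => hx₀min hx
  have hMle : ∀ x ∈ K', |η x| ≤ M := fun x hx => hx₁max hx
  have hM : 0 < M := lt_of_lt_of_le hm (hMle x₀ hx₀K)
  clear_value m M
  have huc := hK'.uniformContinuousOn_of_continuous hcont.continuousOn
  rw [Metric.uniformContinuousOn_iff] at huc
  rw [Metric.tendsto_nhds]
  intro ε hε
  obtain ⟨δ, hδpos, hδ⟩ := huc (ε * m^2 / (8 * M)) (by positivity)
  set h₀ := min 1 ((δ / C')^2) with hh₀def
  have hh₀pos : 0 < h₀ := lt_min one_pos (by positivity)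
  filter_upwards [Ioo_mem_nhdsGT_of_mem (Set.left_mem_Ico.mpr hh₀pos)] with h hh
  obtain ⟨hh1, hh2⟩ := hh
  have hsq1 : Real.sqrt h ≤ 1 := by
    calc Real.sqrt h ≤ Real.sqrt h₀ := Real.sqrt_le_sqrt hh2.le
      _ ≤ Real.sqrt 1 := Real.sqrt_le_sqrt (min_le_left _ _)
      _ = 1 := Real.sqrt_one
  have hsqδ : Real.sqrt h * C' < δ := by
    have h1 : Real.sqrt h < δ / C' := by
      have := Real.sqrt_lt_sqrt hh1.le (lt_of_lt_of_le hh2 (min_le_right _ _))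
      rwa [Real.sqrt_sq (by positivity)] at this
    calc Real.sqrt h * C' < (δ / C') * C' := by
          exact mul_lt_mul_of_pos_right h1 hC'pos
      _ = δ := by field_simp
  have hwmem : ∀ y ∈ K, ∀ z ∈ Set.Icc (-1:ℝ) 1,
      (y + Real.sqrt h * η y * z) ∈ K' ∧ dist (y + Real.sqrt h * η y * z) y < δ := by
    intro y hy z hz
    have habs : |z| ≤ 1 := abs_le.mpr ⟨hz.1, hz.2⟩
    have hsqnn : 0 ≤ Real.sqrt h := Real.sqrt_nonneg h
    have hηy := hηK y hy
    have hd : dist (y + Real.sqrt h * η y * z) y ≤ Real.sqrt h * C' := by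
      rw [Real.dist_eq]
      have he : y + Real.sqrt h * η y * z - y = Real.sqrt h * η y * z := by ring
      rw [he, abs_mul, abs_mul, abs_of_nonneg hsqnn]
      calc Real.sqrt h * |η y| * |z| ≤ Real.sqrt h * |η y| * 1 :=
            mul_le_mul_of_nonneg_left habs (mul_nonneg hsqnn (abs_nonneg _))
        _ = Real.sqrt h * |η y| := mul_one _
        _ ≤ Real.sqrt h * C' := mul_le_mul_of_nonneg_left hηy hsqnn
    constructor
    · refine Metric.mem_cthickening_of_dist_le _ y C' K hy ?_
      calc dist (y + Real.sqrt h * η y * z) y ≤ Real.sqrt h * C' := hd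
        _ ≤ 1 * C' := mul_le_mul_of_nonneg_right hsq1 hC'pos.le
        _ = C' := one_mul _
    · exact lt_of_le_of_lt hd hsqδ
  have key : ∀ y ∈ K, |(∫ z in (-1:ℝ)..1,
      (η y)^2 * (1 - |z|) / (η (y + Real.sqrt h * η y * z))^2) - 1| ≤ ε/2 := by
    intro y hy
    set f : ℝ → ℝ := fun z => (η y)^2 * (1 - |z|) / (η (y + Real.sqrt h * η y * z))^2 with hfdef
    have hfc : Continuous f := by
      apply Continuous.div
      · exact continuous_const.mul (continuous_const.sub continuous_abs)
      · exact ((hcont.comp (by continuity)).pow 2)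
      · intro z; exact pow_ne_zero 2 (hne _)
    have hg : IntervalIntegrable (fun z : ℝ => 1 - |z|) volume (-1) 1 :=
      (continuous_const.sub continuous_abs).intervalIntegrable _ _
    have hsub : (∫ z in (-1:ℝ)..1, f z) - 1 = ∫ z in (-1:ℝ)..1, (f z - (1 - |z|)) := by
      rw [intervalIntegral.integral_sub (hfc.intervalIntegrable _ _) hg, tri_int]
    rw [hsub]
    have hbound : ∀ z ∈ Set.uIoc (-1:ℝ) 1, ‖f z - (1 - |z|)‖ ≤ ε/4 := by
      intro z hz
      have hzI : z ∈ Set.Icc (-1:ℝ) 1 := by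
        rw [Set.uIoc_of_le (by norm_num : (-1:ℝ) ≤ 1)] at hz
        exact ⟨hz.1.le, hz.2⟩
      obtain ⟨hwK', hwd⟩ := hwmem y hy z hzI
      set w := y + Real.sqrt h * η y * z with hwdef
      have hyK' : y ∈ K' := hKsub hy
      have hηd : |η w - η y| < ε * m^2 / (8*M) := by
        have := hδ w hwK' y hyK' hwd
        rwa [Real.dist_eq] at this
      have hwm : m ≤ |η w| := hmle w hwK'
      have hwM : |η w| ≤ M := hMle w hwK'
      have hyM : |η y| ≤ M := hMle y hyK'
      have hw2 : m^2 ≤ (η w)^2 := by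
        rw [← sq_abs (η w)]
        exact pow_le_pow_left₀ hm.le hwm 2
      have hw2pos : 0 < (η w)^2 := lt_of_lt_of_le (pow_pos hm 2) hw2
      have hfe : f z - (1 - |z|) = (1 - |z|) * (((η y)^2 - (η w)^2)/(η w)^2) := by
        rw [hfdef]
        show (η y)^2 * (1 - |z|) / (η w)^2 - (1 - |z|) = _
        have hwne := hne w
        field_simp
      rw [hfe, Real.norm_eq_abs, abs_mul]
      have h1z0 : 0 ≤ 1 - |z| := by
        have := abs_le.mpr ⟨hzI.1, hzI.2⟩; linarith
      have h1z1 : abs (1 - |z|) ≤ 1 := by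
        rw [abs_of_nonneg h1z0]
        have := abs_nonneg z; linarith
      have hratio : |((η y)^2 - (η w)^2)/(η w)^2| ≤ ε/4 := by
        rw [abs_div, abs_of_nonneg hw2pos.le, div_le_iff₀ hw2pos]
        have hnum : |(η y)^2 - (η w)^2| ≤ 2*M*(ε*m^2/(8*M)) := by
          have he : (η y)^2 - (η w)^2 = (η y - η w)*(η y + η w) := by ring
          rw [he, abs_mul]
          have h1 : |η y - η w| ≤ ε*m^2/(8*M) := by rw [abs_sub_comm]; exact hηd.le
          have h2 : |η y + η w| ≤ 2*M := (abs_add_le _ _).trans (by linarith)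
          calc |η y - η w| * |η y + η w| ≤ (ε*m^2/(8*M)) * (2*M) :=
                mul_le_mul h1 h2 (abs_nonneg _) (by positivity)
            _ = 2*M*(ε*m^2/(8*M)) := by ring
        have he2 : 2*M*(ε*m^2/(8*M)) = ε*m^2/4 := by field_simp; ring
        calc |(η y)^2 - (η w)^2| ≤ ε*m^2/4 := by linarith
          _ = ε/4 * m^2 := by ring
          _ ≤ ε/4 * (η w)^2 := mul_le_mul_of_nonneg_left hw2 (by positivity)
      calc abs (1 - |z|) * |((η y)^2 - (η w)^2)/(η w)^2| ≤ 1 * (ε/4) :=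
            mul_le_mul h1z1 hratio (abs_nonneg _) one_pos.le
        _ = ε/4 := one_mul _
    have hmain := intervalIntegral.norm_integral_le_of_norm_le_const hbound
    rw [← Real.norm_eq_abs]
    refine le_trans hmain (le_of_eq ?_)
    norm_num
    ring
  have hsup_le : (⨆ y ∈ K, |(∫ z in (-1:ℝ)..1,
      (η y)^2 * (1 - |z|) / (η (y + Real.sqrt h * η y * z))^2) - 1|) ≤ ε/2 :=
    Real.iSup_le (fun y => Real.iSup_le (fun hy => key y hy) (by positivity)) (by positivity)
  have hsup_nonneg : (0:ℝ) ≤ ⨆ y ∈ K, |(∫ z in (-1:ℝ)..1,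
      (η y)^2 * (1 - |z|) / (η (y + Real.sqrt h * η y * z))^2) - 1| :=
    Real.iSup_nonneg fun y => Real.iSup_nonneg fun _ => abs_nonneg _
  rw [Real.dist_eq, sub_zero, abs_of_nonneg hsup_nonneg]
  linarith
end

section
/- Define sets C_n ⊆ [0,1] by C_0 = [0,1] and C_{n+1} = (1/3)·C_n ∪ ((C_n + 2)/3). Then for every n ∈ ℕ, every h ∈ (0,1) and every y ∈ ℝ, there exists a unique a ∈ (0,∞) satisfying (1/2)(3/2)^n ∫_{y−a}^{y+a} 1_{C_n}(u) (a − |u − y|) du + a² = h, and moreover this unique solution satisfies a ≤ √h. -/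
open MeasureTheory

/-- The finite-stage approximations of the Cantor ternary set:
`C_0 = [0,1]` and `C_{n+1} = (1/3)·C_n ∪ (C_n + 2)/3`. -/
def cantorApprox : ℕ → Set ℝ
  | 0 => Set.Icc 0 1
  | n + 1 => (fun x : ℝ => x / 3) '' cantorApprox n
      ∪ (fun x : ℝ => (x + 2) / 3) '' cantorApprox n

lemma cantorApprox_measurable (n : ℕ) : MeasurableSet (cantorApprox n) := by
  induction n with
  | zero => exact measurableSet_Icc
  | succ n ih =>
    have e1 : (fun x : ℝ => x / 3) '' cantorApprox n
        = (fun x : ℝ => 3 * x) ⁻¹' cantorApprox n := by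
      ext u
      simp only [Set.mem_image, Set.mem_preimage]
      constructor
      · rintro ⟨x, hx, rfl⟩
        have : (3:ℝ) * (x / 3) = x := by ring
        rw [this]; exact hx
      · intro hu; exact ⟨3 * u, hu, by ring⟩
    have e2 : (fun x : ℝ => (x + 2) / 3) '' cantorApprox n
        = (fun x : ℝ => 3 * x - 2) ⁻¹' cantorApprox n := by
      ext u
      simp only [Set.mem_image, Set.mem_preimage]
      constructor
      · rintro ⟨x, hx, rfl⟩
        have : (3:ℝ) * ((x + 2) / 3) - 2 = x := by ring
        rw [this]; exact hx
      · intro hu; exact ⟨3 * u - 2, hu, by ring⟩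
    show MeasurableSet (_ ∪ _)
    rw [e1, e2]
    exact ((measurable_const_mul 3) ih).union
      (((measurable_const_mul 3).sub measurable_const) ih)

noncomputable def cbFun (n : ℕ) (y a : ℝ) : ℝ → ℝ :=
  fun u => Set.indicator (cantorApprox n) (fun _ => (1 : ℝ)) u * max (a - |u - y|) 0

noncomputable def cbI (n : ℕ) (y a : ℝ) : ℝ := ∫ u, cbFun n y a u

lemma cbg_nonneg (n : ℕ) (u : ℝ) :
    0 ≤ Set.indicator (cantorApprox n) (fun _ => (1 : ℝ)) u :=
  Set.indicator_nonneg (fun _ _ => zero_le_one) u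

lemma cbg_le_one (n : ℕ) (u : ℝ) :
    Set.indicator (cantorApprox n) (fun _ => (1 : ℝ)) u ≤ 1 :=
  Set.indicator_le' (fun _ _ => le_refl 1) (fun _ _ => zero_le_one) u

lemma cbFun_nonneg (n : ℕ) (y a u : ℝ) : 0 ≤ cbFun n y a u :=
  mul_nonneg (cbg_nonneg n u) (le_max_right _ _)

lemma cbFun_measurable (n : ℕ) (y a : ℝ) : Measurable (cbFun n y a) :=
  (measurable_const.indicator (cantorApprox_measurable n)).mul
    (by fun_prop)

lemma cbFun_eq_zero (n : ℕ) (y a : ℝ) {u : ℝ} (hu : a ≤ |u - y|) :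
    cbFun n y a u = 0 := by
  unfold cbFun
  rw [max_eq_right (by linarith), mul_zero]

lemma cbFun_integrable (n : ℕ) (y a : ℝ) : Integrable (cbFun n y a) := by
  refine Integrable.mono'
    (g := (Set.Icc (y - a) (y + a)).indicator (fun _ => |a|)) ?_ 
    (cbFun_measurable n y a).aestronglyMeasurable ?_
  · rw [integrable_indicator_iff measurableSet_Icc]
    exact (integrableOn_const_iff).mpr (Or.inr measure_Icc_lt_top)
  · refine Filter.Eventually.of_forall fun u => ?_
    by_cases hu : u ∈ Set.Icc (y - a) (y + a)
    · rw [Set.indicator_of_mem hu]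
      rw [Real.norm_eq_abs, abs_of_nonneg (cbFun_nonneg n y a u)]
      have h1 : max (a - |u - y|) 0 ≤ |a| := by
        rcases le_or_gt (a - |u - y|) 0 with hc | hc
        · simp [max_eq_right hc, abs_nonneg]
        · rw [max_eq_left hc.le]
          have := abs_nonneg (u - y)
          have := le_abs_self a
          linarith
      calc cbFun n y a u ≤ 1 * max (a - |u - y|) 0 := by
            exact mul_le_mul_of_nonneg_right (cbg_le_one n u) (le_max_right _ _)
        _ = max (a - |u - y|) 0 := one_mul _
        _ ≤ |a| := h1
    · rw [Set.indicator_of_notMem hu]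
      have : a ≤ |u - y| := by
        simp only [Set.mem_Icc, not_and_or, not_le] at hu
        rcases hu with hu | hu
        · rw [le_abs]; right; linarith
        · rw [le_abs]; left; linarith
      rw [cbFun_eq_zero n y a this]
      simp

lemma cbI_eq_interval (n : ℕ) (y : ℝ) {a : ℝ} (ha : 0 ≤ a) :
    (∫ u in (y - a)..(y + a),
      Set.indicator (cantorApprox n) (fun _ => (1 : ℝ)) u * (a - |u - y|))
    = cbI n y a := by
  rw [intervalIntegral.integral_of_le (by linarith)]
  have h1 : ∀ u ∈ Set.Ioc (y - a) (y + a),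
      Set.indicator (cantorApprox n) (fun _ => (1 : ℝ)) u * (a - |u - y|)
        = cbFun n y a u := by
    intro u hu
    have : |u - y| ≤ a := by
      rw [abs_le]; constructor <;> [linarith [hu.1]; linarith [hu.2]]
    unfold cbFun
    rw [max_eq_left (by linarith)]
  rw [setIntegral_congr_fun measurableSet_Ioc h1]
  rw [setIntegral_eq_integral_of_forall_compl_eq_zero]
  · rfl
  · intro u hu
    simp only [Set.mem_Ioc, not_and_or, not_lt, not_le] at hu
    refine cbFun_eq_zero n y a ?_
    rcases hu with hu | hu
    · rw [le_abs]; right; linarith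
    · rw [le_abs]; left; linarith

lemma cbI_nonneg (n : ℕ) (y a : ℝ) : 0 ≤ cbI n y a :=
  integral_nonneg (cbFun_nonneg n y a)

lemma cbI_zero (n : ℕ) (y : ℝ) : cbI n y 0 = 0 := by
  have : cbFun n y 0 = fun _ => 0 := by
    funext u
    exact cbFun_eq_zero n y 0 (abs_nonneg _)
  unfold cbI
  rw [this, integral_zero]

lemma cbI_mono (n : ℕ) (y : ℝ) {a b : ℝ} (hab : a ≤ b) :
    cbI n y a ≤ cbI n y b := by
  refine integral_mono (cbFun_integrable n y a) (cbFun_integrable n y b) fun u => ?_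
  exact mul_le_mul_of_nonneg_left
    (max_le_max (by linarith) le_rfl) (cbg_nonneg n u)

lemma cbI_lip (n : ℕ) (y : ℝ) {a b : ℝ} (ha : a ∈ Set.Icc (0:ℝ) 1)
    (hb : b ∈ Set.Icc (0:ℝ) 1) :
    |cbI n y b - cbI n y a| ≤ 2 * |b - a| := by
  have hint : Integrable (fun u => cbFun n y b u - cbFun n y a u) :=
    (cbFun_integrable n y b).sub (cbFun_integrable n y a)
  have hsub : cbI n y b - cbI n y a = ∫ u, (cbFun n y b u - cbFun n y a u) := by
    rw [integral_sub (cbFun_integrable n y b) (cbFun_integrable n y a)]; rfl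
  rw [hsub]
  have key : ∀ u, ‖cbFun n y b u - cbFun n y a u‖
      ≤ (Set.Icc (y - 1) (y + 1)).indicator (fun _ => |b - a|) u := by
    intro u
    by_cases hu : u ∈ Set.Icc (y - 1) (y + 1)
    · rw [Set.indicator_of_mem hu]
      unfold cbFun
      rw [← mul_sub, Real.norm_eq_abs, abs_mul]
      calc _ ≤ 1 * |max (b - |u - y|) 0 - max (a - |u - y|) 0| := by
            refine mul_le_mul_of_nonneg_right ?_ (abs_nonneg _)
            rw [abs_of_nonneg (cbg_nonneg n u)]; exact cbg_le_one n u
        _ = |max (b - |u - y|) 0 - max (a - |u - y|) 0| := one_mul _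
        _ ≤ |b - a| := by
            have := abs_max_sub_max_le_abs (b - |u - y|) (a - |u - y|) 0
            calc |max (b - |u - y|) 0 - max (a - |u - y|) 0|
                ≤ |(b - |u - y|) - (a - |u - y|)| := this
              _ = |b - a| := by ring_nf
    · rw [Set.indicator_of_notMem hu]
      have h1 : (1:ℝ) ≤ |u - y| := by
        simp only [Set.mem_Icc, not_and_or, not_le] at hu
        rcases hu with hu | hu
        · rw [le_abs]; right; linarith
        · rw [le_abs]; left; linarith
      rw [cbFun_eq_zero n y b (le_trans hb.2 h1),
        cbFun_eq_zero n y a (le_trans ha.2 h1)]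
      simp
  calc |∫ u, (cbFun n y b u - cbFun n y a u)|
      ≤ ∫ u, ‖cbFun n y b u - cbFun n y a u‖ := by
        rw [← Real.norm_eq_abs]; exact norm_integral_le_integral_norm _
    _ ≤ ∫ u, (Set.Icc (y - 1) (y + 1)).indicator (fun _ => |b - a|) u := by
        refine integral_mono hint.norm ?_ key
        rw [integrable_indicator_iff measurableSet_Icc]
        exact (integrableOn_const_iff).mpr (Or.inr measure_Icc_lt_top)
    _ = 2 * |b - a| := by
        rw [integral_indicator_const _ measurableSet_Icc]
        rw [measureReal_def, Real.volume_Icc]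
        rw [show y + 1 - (y - 1) = (2:ℝ) by ring]
        rw [ENNReal.toReal_ofReal (by norm_num)]
        simp [mul_comm]

theorem cantor_bm_scale_factor (n : ℕ) (h y : ℝ) (hh0 : 0 < h) (hh1 : h < 1) :
    (∃! a : ℝ, 0 < a ∧
      (1 / 2) * (3 / 2 : ℝ)^n *
          (∫ u in (y - a)..(y + a),
            Set.indicator (cantorApprox n) (fun _ => (1 : ℝ)) u * (a - |u - y|))
        + a^2 = h) ∧
    ∀ a : ℝ, 0 < a →
      (1 / 2) * (3 / 2 : ℝ)^n *
          (∫ u in (y - a)..(y + a),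
            Set.indicator (cantorApprox n) (fun _ => (1 : ℝ)) u * (a - |u - y|))
        + a^2 = h →
      a ≤ Real.sqrt h := by
  set c : ℝ := (1 / 2) * (3 / 2 : ℝ)^n with hc
  have hc0 : 0 < c := by positivity
  set F : ℝ → ℝ := fun a => c * cbI n y a + a^2 with hF
  have hconv : ∀ b : ℝ, 0 ≤ b →
      (1 / 2) * (3 / 2 : ℝ)^n *
          (∫ u in (y - b)..(y + b),
            Set.indicator (cantorApprox n) (fun _ => (1 : ℝ)) u * (b - |u - y|))
        + b^2 = F b := by
    intro b hb
    simp only [hF]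
    rw [cbI_eq_interval n y hb]
  have hFmono : ∀ a b : ℝ, 0 ≤ a → a < b → F a < F b := by
    intro a b ha hab
    have h1 := cbI_mono n y hab.le
    have h2 : a^2 < b^2 := by nlinarith
    have h3 := mul_le_mul_of_nonneg_left h1 hc0.le
    simp only [hF]
    nlinarith
  have hFcont : ContinuousOn F (Set.Icc 0 1) := by
    have hlip : LipschitzOnWith 2 (fun a => cbI n y a) (Set.Icc 0 1) := by
      rw [lipschitzOnWith_iff_dist_le_mul]
      intro p hp q hq
      rw [Real.dist_eq, Real.dist_eq]
      have := cbI_lip n y hq hp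
      push_cast
      linarith
    exact (continuousOn_const.mul hlip.continuousOn).add
      (continuous_pow 2).continuousOn
  have hs0 : (0:ℝ) ≤ Real.sqrt h := Real.sqrt_nonneg h
  have hs1 : Real.sqrt h ≤ 1 := by
    rw [show (1:ℝ) = Real.sqrt 1 by simp]
    exact Real.sqrt_le_sqrt hh1.le
  have hsq : Real.sqrt h ^ 2 = h := Real.sq_sqrt hh0.le
  have hF0 : F 0 = 0 := by simp [hF, cbI_zero]
  have hFs : h ≤ F (Real.sqrt h) := by
    have := mul_nonneg hc0.le (cbI_nonneg n y (Real.sqrt h))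
    simp only [hF]
    nlinarith
  have hsubs : Set.Icc (0:ℝ) (Real.sqrt h) ⊆ Set.Icc 0 1 :=
    Set.Icc_subset_Icc le_rfl hs1
  obtain ⟨a, ⟨ha0, has⟩, hFa⟩ :=
    intermediate_value_Icc hs0 (hFcont.mono hsubs)
      (Set.mem_Icc.mpr ⟨by rw [hF0]; exact hh0.le, hFs⟩)
  have ha_pos : 0 < a := by
    rcases ha0.lt_or_eq with hlt | heq
    · exact hlt
    · exfalso; rw [← heq, hF0] at hFa; linarith
  constructor
  · refine ⟨a, ⟨ha_pos, by rw [hconv a ha0]; exact hFa⟩, ?_⟩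
    intro b ⟨hb_pos, hb_eq⟩
    rw [hconv b hb_pos.le] at hb_eq
    rcases lt_trichotomy b a with hlt | heq | hgt
    · exact absurd (hFmono b a hb_pos.le hlt) (by rw [hb_eq, hFa]; simp)
    · exact heq
    · exact absurd (hFmono a b ha0 hgt) (by rw [hb_eq, hFa]; simp)
  · intro b hb_pos hb_eq
    rw [hconv b hb_pos.le] at hb_eq
    have h1 : b^2 ≤ h := by
      have := mul_nonneg hc0.le (cbI_nonneg n y b)
      simp only [hF] at hb_eq
      linarith
    calc b = Real.sqrt (b^2) := (Real.sqrt_sq hb_pos.le).symm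
      _ ≤ Real.sqrt h := Real.sqrt_le_sqrt h1
end

section
/- Let μ and ν be finite Borel measures on ℝ with no atoms (i.e. μ({x}) = ν({x}) = 0 for every x ∈ ℝ). Then for every y ∈ ℝ and every a ≥ 0, | ∫_ℝ (a − |u − y|)⁺ μ(du) − ∫_ℝ (a − |u − y|)⁺ ν(du) | ≤ 2a · sup_{x ∈ ℝ} | μ((−∞, x]) − ν((−∞, x]) |. -/
open MeasureTheory

lemma aux_Ioo_toReal (m : Measure ℝ) [IsFiniteMeasure m] (hm : ∀ x : ℝ, m {x} = 0)
    {b c : ℝ} (hbc : b ≤ c) :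
    (m (Set.Ioo b c)).toReal = (m (Set.Iic c)).toReal - (m (Set.Iic b)).toReal := by
  have h1 : m (Set.Ioo b c) = m (Set.Ioc b c) := by
    rw [← Set.Ioc_sdiff_right, measure_diff_null (hm c)]
  have h2 : m (Set.Ioc b c) = m (Set.Iic c) - m (Set.Iic b) := by
    rw [← Set.Iic_sdiff_Iic, measure_diff (Set.Iic_subset_Iic.mpr hbc)
      measurableSet_Iic.nullMeasurableSet (measure_ne_top _ _)]
  rw [h1, h2, ENNReal.toReal_sub_of_le (measure_mono (Set.Iic_subset_Iic.mpr hbc))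
    (measure_ne_top _ _)]

theorem integral_posPart_diff_le_kolmogorov_dist
    (μ ν : Measure ℝ) [IsFiniteMeasure μ] [IsFiniteMeasure ν]
    (hμ : ∀ x : ℝ, μ {x} = 0) (hν : ∀ x : ℝ, ν {x} = 0)
    (y a : ℝ) (ha : 0 ≤ a) :
    |(∫ u, max (a - |u - y|) 0 ∂μ) - ∫ u, max (a - |u - y|) 0 ∂ν|
      ≤ 2 * a * ⨆ x : ℝ, |(μ (Set.Iic x)).toReal - (ν (Set.Iic x)).toReal| := by
  set f : ℝ → ℝ := fun u => max (a - |u - y|) 0 with hf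
  set F : ℝ → ℝ := fun x => (μ (Set.Iic x)).toReal with hF
  set G : ℝ → ℝ := fun x => (ν (Set.Iic x)).toReal with hG
  set C : ℝ := ⨆ x : ℝ, |F x - G x| with hCdef
  have hbdd : BddAbove (Set.range fun x => |F x - G x|) := by
    refine ⟨(μ Set.univ).toReal + (ν Set.univ).toReal, ?_⟩
    rintro _ ⟨x, rfl⟩
    have h1 : F x ≤ (μ Set.univ).toReal :=
      ENNReal.toReal_mono (measure_ne_top _ _) (measure_mono (Set.subset_univ _))
    have h2 : G x ≤ (ν Set.univ).toReal :=
      ENNReal.toReal_mono (measure_ne_top _ _) (measure_mono (Set.subset_univ _))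
    have h3 : (0:ℝ) ≤ F x := ENNReal.toReal_nonneg
    have h4 : (0:ℝ) ≤ G x := ENNReal.toReal_nonneg
    rw [abs_sub_le_iff]; constructor <;> linarith
  have hC : ∀ x, |F x - G x| ≤ C := fun x => le_ciSup hbdd x
  have hC0 : 0 ≤ C := le_trans (abs_nonneg _) (hC 0)
  have hfnn : ∀ u, 0 ≤ f u := fun u => le_max_right _ _
  have hfle : ∀ u, f u ≤ a := fun u => max_le (by linarith [abs_nonneg (u - y)]) ha
  have hfm : Measurable f :=
    (measurable_const.sub ((measurable_id.sub measurable_const).abs)).max measurable_const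
  have hfint : ∀ (m : Measure ℝ) [IsFiniteMeasure m], Integrable f m := by
    intro m _
    refine ⟨hfm.aestronglyMeasurable, HasFiniteIntegral.of_bounded (C := a) ?_⟩
    filter_upwards with u
    rw [Real.norm_eq_abs, abs_of_nonneg (hfnn u)]
    exact hfle u
  have hset : ∀ t : ℝ, 0 < t → {u : ℝ | t < f u} = Set.Ioo (y - a + t) (y + a - t) := by
    intro t ht
    ext u
    simp only [Set.mem_setOf_eq, Set.mem_Ioo, hf, lt_max_iff]
    constructor
    · rintro (h | h)
      · have h2 : |u - y| < a - t := by linarith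
        rw [abs_lt] at h2
        constructor <;> linarith [h2.1, h2.2]
      · exact absurd h (not_lt.mpr ht.le)
    · intro hu
      refine Or.inl ?_
      have h2 : |u - y| < a - t := abs_lt.mpr ⟨by linarith [hu.1], by linarith [hu.2]⟩
      linarith
  -- layer cake for both measures
  have hlcμ : (∫ u, f u ∂μ) = ∫ t in Set.Ioi (0:ℝ), (μ {u : ℝ | t < f u}).toReal :=
    (hfint μ).integral_eq_integral_meas_lt (Filter.Eventually.of_forall hfnn)
  have hlcν : (∫ u, f u ∂ν) = ∫ t in Set.Ioi (0:ℝ), (ν {u : ℝ | t < f u}).toReal :=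
    (hfint ν).integral_eq_integral_meas_lt (Filter.Eventually.of_forall hfnn)
  set g : Measure ℝ → ℝ → ℝ := fun m t => (m {u : ℝ | t < f u}).toReal with hg
  -- values of g
  have hgval : ∀ (m : Measure ℝ) [IsFiniteMeasure m], (∀ x : ℝ, m {x} = 0) →
      ∀ t : ℝ, 0 < t → t ≤ a →
      g m t = (m (Set.Iic (y + a - t))).toReal - (m (Set.Iic (y - a + t))).toReal := by
    intro m _ hm t ht hta
    rw [hg]
    simp only
    rw [hset t ht, aux_Ioo_toReal m hm (by linarith)]
  have hgzero : ∀ (m : Measure ℝ), ∀ t : ℝ, a < t → g m t = 0 := by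
    intro m t hta
    have ht : 0 < t := lt_of_le_of_lt ha hta
    rw [hg]; simp only
    rw [hset t ht, Set.Ioo_eq_empty (by intro h; linarith), measure_empty]
    simp
  -- g is antitone hence measurable
  have hganti : ∀ (m : Measure ℝ) [IsFiniteMeasure m], Antitone (g m) := by
    intro m _ s t hst
    exact ENNReal.toReal_mono (measure_ne_top _ _)
      (measure_mono (fun u hu => lt_of_le_of_lt hst hu))
  -- integrability of g on Ioi 0
  have hgint : ∀ (m : Measure ℝ) [IsFiniteMeasure m], IntegrableOn (g m) (Set.Ioi 0) := by
    intro m _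
    refine Integrable.mono' (g := Set.indicator (Set.Ioc 0 a) fun _ => (m Set.univ).toReal)
      ?_ ((hganti m).measurable.aestronglyMeasurable) ?_
    · exact (integrable_indicator_iff measurableSet_Ioc).mpr
        (integrableOn_const measure_Ioc_lt_top.ne)
    · rw [ae_restrict_iff' measurableSet_Ioi]
      filter_upwards with t ht
      rw [Real.norm_eq_abs, abs_of_nonneg ENNReal.toReal_nonneg]
      by_cases hta : t ≤ a
      · rw [Set.indicator_of_mem (Set.mem_Ioc.mpr ⟨ht, hta⟩)]
        exact ENNReal.toReal_mono (measure_ne_top _ _) (measure_mono (Set.subset_univ _))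
      · rw [show (m {u : ℝ | t < f u}).toReal = g m t from rfl, hgzero m t (not_le.mp hta)]
        exact Set.indicator_nonneg (fun _ _ => ENNReal.toReal_nonneg) t
  -- combine
  rw [hlcμ, hlcν, ← integral_sub (hgint μ) (hgint ν)]
  have hbound : ∀ᵐ t ∂(volume.restrict (Set.Ioi (0:ℝ))),
      ‖g μ t - g ν t‖ ≤ Set.indicator (Set.Ioc 0 a) (fun _ => 2 * C) t := by
    rw [ae_restrict_iff' measurableSet_Ioi]
    filter_upwards with t ht
    by_cases hta : t ≤ a
    · rw [Set.indicator_of_mem (Set.mem_Ioc.mpr ⟨ht, hta⟩)]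
      rw [hgval μ hμ t ht hta, hgval ν hν t ht hta]
      have h1 := hC (y + a - t)
      have h2 := hC (y - a + t)
      rw [Real.norm_eq_abs]
      rw [abs_sub_le_iff] at h1 h2 ⊢
      constructor <;> [ (nlinarith [h1.1, h2.2]) ; (nlinarith [h1.2, h2.1]) ]
    · rw [hgzero μ t (not_le.mp hta), hgzero ν t (not_le.mp hta),
        Set.indicator_of_notMem (fun h => hta h.2)]
      simp
  calc |∫ t in Set.Ioi (0:ℝ), (g μ t - g ν t)|
      ≤ ∫ t in Set.Ioi (0:ℝ), Set.indicator (Set.Ioc 0 a) (fun _ => 2 * C) t := by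
        refine norm_integral_le_of_norm_le ?_ hbound
        exact (integrable_indicator_iff measurableSet_Ioc).mpr
          (integrableOn_const measure_Ioc_lt_top.ne) |>.restrict
    _ = 2 * a * C := by
        rw [setIntegral_indicator measurableSet_Ioc]
        have : Set.Ioi (0:ℝ) ∩ Set.Ioc 0 a = Set.Ioc 0 a := by
          ext t; simp only [Set.mem_inter_iff, Set.mem_Ioi, Set.mem_Ioc]
          exact ⟨fun h => h.2, fun h => ⟨h.1, h⟩⟩
        rw [this, setIntegral_const, Real.volume_real_Ioc, smul_eq_mul,
          max_eq_left (by linarith)]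
        ring
end
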